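/- Minkowski addition of polytopes is cancellable: if A, B, C are polytopes in ℝⁿ and A + C = B + C (as Minkowski sums of sets), then A = B. -/

import Mathlib

open Pointwise

/-- A polytope in `ℝⁿ`: the convex hull of a non-empty finite set of points. -/
def IsPolytope {n : ℕ} (P : Set (EuclideanSpace ℝ (Fin n))) : Prop :=
  ∃ s : Finset (EuclideanSpace ℝ (Fin n)),
    s.Nonempty ∧ P = convexHull ℝ (s : Set (EuclideanSpace ℝ (Fin n)))

section aux

variable {E : Type*} [NormedAddCommGroup E] [NormedSpace ℝ E]

lemma sSup_image_add {s t : Set E} (f : E →L[ℝ] ℝ) (hs : IsCompact s) (ht : IsCompact t)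
    (hsne : s.Nonempty) (htne : t.Nonempty) :
    sSup (f '' (s + t)) = sSup (f '' s) + sSup (f '' t) := by
  have hfs : IsCompact (f '' s) := hs.image f.continuous
  have hft : IsCompact (f '' t) := ht.image f.continuous
  have hfst : IsCompact (f '' (s + t)) := (hs.add ht).image f.continuous
  apply le_antisymm
  · apply csSup_le ((hsne.add htne).image f)
    rintro x ⟨y, ⟨a, ha, b, hb, rfl⟩, rfl⟩
    rw [map_add]
    exact add_le_add (le_csSup hfs.bddAbove ⟨a, ha, rfl⟩)
      (le_csSup hft.bddAbove ⟨b, hb, rfl⟩)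
  · obtain ⟨a, ha, ha'⟩ := hfs.sSup_mem (hsne.image f)
    obtain ⟨b, hb, hb'⟩ := hft.sSup_mem (htne.image f)
    have heq : sSup (f '' s) + sSup (f '' t) = f (a + b) := by rw [map_add, ha', hb']
    rw [heq]
    exact le_csSup hfst.bddAbove ⟨a + b, ⟨a, ha, b, hb, rfl⟩, rfl⟩

lemma subset_of_sSup_le {A B : Set E} (hAc : IsCompact A) (hBc : IsCompact B)
    (hBconv : Convex ℝ B) (hBne : B.Nonempty)
    (hle : ∀ f : E →L[ℝ] ℝ, sSup (f '' A) ≤ sSup (f '' B)) : A ⊆ B := by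
  intro x hx
  by_contra hxB
  obtain ⟨f, u, hfu, hux⟩ := geometric_hahn_banach_closed_point hBconv hBc.isClosed hxB
  have h1 : sSup (f '' B) ≤ u :=
    csSup_le (hBne.image f) (by rintro y ⟨b, hb, rfl⟩; exact (hfu b hb).le)
  have h2 : f x ≤ sSup (f '' A) :=
    le_csSup (hAc.image f.continuous).bddAbove ⟨x, hx, rfl⟩
  exact absurd (h2.trans ((hle f).trans h1)) (not_le.2 hux)

end aux

theorem stmt7 (n : ℕ) (A B C : Set (EuclideanSpace ℝ (Fin n)))
    (hA : IsPolytope A) (hB : IsPolytope B) (hC : IsPolytope C)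
    (h : A + C = B + C) : A = B := by
  obtain ⟨sA, hsAne, rfl⟩ := hA
  obtain ⟨sB, hsBne, rfl⟩ := hB
  obtain ⟨sC, hsCne, rfl⟩ := hC
  set A := convexHull ℝ (sA : Set (EuclideanSpace ℝ (Fin n))) with hAdef
  set B := convexHull ℝ (sB : Set (EuclideanSpace ℝ (Fin n))) with hBdef
  set C := convexHull ℝ (sC : Set (EuclideanSpace ℝ (Fin n))) with hCdef
  have hAc : IsCompact A := sA.finite_toSet.isCompact_convexHull (𝕜 := ℝ)
  have hBc : IsCompact B := sB.finite_toSet.isCompact_convexHull (𝕜 := ℝ)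
  have hCc : IsCompact C := sC.finite_toSet.isCompact_convexHull (𝕜 := ℝ)
  have hAne : A.Nonempty := (hsAne.to_set.mono (subset_convexHull ℝ _))
  have hBne : B.Nonempty := (hsBne.to_set.mono (subset_convexHull ℝ _))
  have hCne : C.Nonempty := (hsCne.to_set.mono (subset_convexHull ℝ _))
  have key : ∀ f : EuclideanSpace ℝ (Fin n) →L[ℝ] ℝ, sSup (f '' A) = sSup (f '' B) := by
    intro f
    have h1 := sSup_image_add f hAc hCc hAne hCne
    have h2 := sSup_image_add f hBc hCc hBne hCne
    have : sSup (f '' A) + sSup (f '' C) = sSup (f '' B) + sSup (f '' C) := by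
      rw [← h1, ← h2, h]
    exact add_right_cancel this
  exact Set.Subset.antisymm
    (subset_of_sSup_le hAc hBc (convex_convexHull ℝ _) hBne fun f => (key f).le)
    (subset_of_sSup_le hBc hAc (convex_convexHull ℝ _) hAne fun f => (key f).ge)
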